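/- For every integer n ≥ 0, the 1×n Tribonacci word rectangles are 2-balanced with respect to each other; that is, |N_c(i,1,n) − N_c(j,1,n)| ≤ 2 for all i, j ≥ 0 and all c ∈ {0,1,2}. -/

import Mathlib

/-- The Tribonacci morphism `0→01, 1→02, 2→0`. -/
def tribMorph : ℕ → List ℕ
  | 0 => [0, 1]
  | 1 => [0, 2]
  | _ => [0]

/-- Iterates of the Tribonacci morphism applied to `0`; `tribBlock k` is a prefix of
the Tribonacci word of length at least `k + 1`. -/
def tribBlock : ℕ → List ℕ
  | 0 => [0]
  | k + 1 => (tribBlock k).flatMap tribMorph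

/-- The Tribonacci word `TR = 0102010⋯`, the fixed point starting with `0` of the
morphism `0→01, 1→02, 2→0`. -/
def trib (i : ℕ) : ℕ := (tribBlock (i + 1)).getD i 0

/-- `N_c(i,m,n)`: the number of occurrences of the letter `c` in the `m × n` word
rectangle whose `(k,ℓ)` entry is `t_{i+k+ℓ}`. -/
def tribN (c i m n : ℕ) : ℕ :=
  ∑ k ∈ Finset.range m, ∑ l ∈ Finset.range n, if trib (i + k + l) = c then 1 else 0

def Tn : ℕ → ℕ
  | 0 => 0
  | 1 => 0
  | 2 => 1
  | (k+3) => Tn (k+2) + Tn (k+1) + Tn k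

lemma block_concat (k : ℕ) :
    tribBlock (k+3) = tribBlock (k+2) ++ tribBlock (k+1) ++ tribBlock k := by
  induction k with
  | zero => rfl
  | succ k ih =>
    calc tribBlock (k+4) = (tribBlock (k+2) ++ tribBlock (k+1) ++ tribBlock k).flatMap tribMorph := by
          rw [← ih]; rfl
    _ = _ := by rw [List.flatMap_append, List.flatMap_append]; rfl

lemma block_length : ∀ k, (tribBlock k).length = Tn (k+3)
  | 0 => rfl
  | 1 => rfl
  | 2 => rfl
  | (k+3) => by
    rw [block_concat, List.length_append, List.length_append,
      block_length (k+2), block_length (k+1), block_length k]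
    rfl

lemma block_count : ∀ k, ∀ c, (tribBlock k).count c =
    if c = 0 then Tn (k+2) else if c = 1 then Tn (k+1) else if c = 2 then Tn k else 0
  | 0, c => by
    rcases c with _|_|_|c <;> simp [tribBlock, Tn, List.count_singleton, List.count_eq_zero]
  | 1, c => by
    rcases c with _|_|_|c <;>
      simp [show tribBlock 1 = [0,1] from rfl, Tn, List.count_cons, List.count_eq_zero]
  | 2, c => by
    rcases c with _|_|_|c <;>
      simp [show tribBlock 2 = [0,1,0,2] from rfl, Tn, List.count_cons, List.count_eq_zero]
  | (k+3), c => by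
    rw [block_concat, List.count_append, List.count_append,
      block_count (k+2) c, block_count (k+1) c, block_count k c]
    rcases c with _|_|_|c <;> simp [Tn]

lemma block_prefix (k : ℕ) : tribBlock k <+: tribBlock (k+1) := by
  induction k with
  | zero => exact ⟨[1], rfl⟩
  | succ k ih =>
    obtain ⟨t, ht⟩ := ih
    refine ⟨t.flatMap tribMorph, ?_⟩
    have h2 : tribBlock (k+2) = (tribBlock k ++ t).flatMap tribMorph := by
      rw [ht]; rfl
    rw [h2, List.flatMap_append]
    rfl

lemma block_prefix_le {k k' : ℕ} (h : k ≤ k') : tribBlock k <+: tribBlock k' := by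
  induction k' with
  | zero => rw [Nat.le_zero.mp h]
  | succ k' ih =>
    rcases Nat.lt_or_ge k (k'+1) with h' | h'
    · exact (ih (by omega)).trans (block_prefix k')
    · rw [Nat.le_antisymm h h']

lemma Tn_ge (k : ℕ) : k + 1 ≤ Tn (k+3) := by
  induction k using Nat.strong_induction_on with
  | _ k ih =>
    match k with
    | 0 => decide
    | 1 => decide
    | 2 => decide
    | (k+3) =>
      have h1 : k + 3 ≤ Tn (k+2+3) := ih (k+2) (by omega)
      have h2 : k + 2 ≤ Tn (k+1+3) := ih (k+1) (by omega)
      have e1 : Tn (k+2+3) = Tn (k+5) := rfl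
      have e1b : Tn (k+1+3) = Tn (k+4) := rfl
      have e2 : Tn (k+3+3) = Tn (k+5) + Tn (k+4) + Tn (k+3) := rfl
      omega

lemma Tn_pos (k : ℕ) : 1 ≤ Tn (k+2) := by
  match k with
  | 0 => decide
  | (k+1) =>
    have := Tn_ge k
    have e : Tn (k+1+2) = Tn (k+3) := rfl
    omega

lemma getD_of_prefix {u w : List ℕ} (h : u <+: w) {i : ℕ} (hi : i < u.length) :
    w.getD i 0 = u.getD i 0 := by
  obtain ⟨t, rfl⟩ := h
  exact List.getD_append u t 0 i hi

lemma trib_eq_block (k i : ℕ) (h : i < Tn (k+3)) : trib i = (tribBlock k).getD i 0 := by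
  have hi1 : i < (tribBlock (i+1)).length := by
    rw [block_length]
    have h1 := Tn_ge (i+1)
    have e : Tn (i+1+3) = Tn (i+4) := rfl
    omega
  have hik : i < (tribBlock k).length := by rw [block_length]; exact h
  rcases Nat.le_total k (i+1) with hk | hk
  · rw [trib, getD_of_prefix (block_prefix_le hk) hik]
  · rw [trib, (getD_of_prefix (block_prefix_le hk) hi1).symm]

def fc (c n : ℕ) : ℕ := ∑ l ∈ Finset.range n, if trib l = c then 1 else 0

lemma fc_take (c k n : ℕ) (h : n ≤ Tn (k+3)) :
    fc c n = ((tribBlock k).take n).count c := by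
  induction n with
  | zero => simp [fc]
  | succ n ih =>
    have hn : n < (tribBlock k).length := by rw [block_length]; omega
    rw [fc, Finset.sum_range_succ, ← fc, ih (by omega), List.take_succ, List.getElem?_eq_getElem hn]
    have ht : trib n = (tribBlock k)[n] := by
      rw [trib_eq_block k n (by omega), List.getD_eq_getElem _ _ hn]
    rw [ht, Option.toList_some, List.count_append]
    rcases eq_or_ne ((tribBlock k)[n]) c with h' | h' <;> simp [h', List.count_singleton]

lemma prefix2 (k : ℕ) : tribBlock (k+1) ++ tribBlock k <+: tribBlock (k+2) := by
  cases k with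
  | zero => exact ⟨[2], rfl⟩
  | succ k => exact ⟨tribBlock k, by rw [← block_concat k]⟩

lemma descent (c k m : ℕ) (hm : m ≤ Tn (k+4) + Tn (k+3)) :
    fc c (Tn (k+5) + m) = (tribBlock (k+2)).count c + fc c m := by
  have e6 : Tn (k+3+3) = Tn (k+5) + Tn (k+4) + Tn (k+3) := rfl
  have h1 : Tn (k+5) + m ≤ Tn (k+3+3) := by omega
  rw [fc_take c (k+3) _ h1, block_concat k, List.append_assoc]
  have hlen : (tribBlock (k+2)).length = Tn (k+5) := block_length _
  rw [← hlen, List.take_length_add_append, List.count_append]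
  congr 1
  have hm2 : m ≤ (tribBlock (k+1) ++ tribBlock k).length := by
    rw [List.length_append, block_length, block_length]
    have e4 : Tn (k+1+3) = Tn (k+4) := rfl
    omega
  obtain ⟨t, ht⟩ := prefix2 k
  have htake : List.take m (tribBlock (k+1) ++ tribBlock k) = List.take m (tribBlock (k+2)) := by
    rw [← ht, List.take_append_of_le_length hm2]
  have hm5 : m ≤ Tn (k+2+3) := by
    have e5 : Tn (k+2+3) = Tn (k+4) + Tn (k+3) + Tn (k+2) := rfl
    omega
  rw [htake, ← fc_take c (k+2) m hm5]

noncomputable section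

lemma exists_beta : ∃ b : ℝ, b^3 = b^2 + b + 1 ∧
    (183928675521/100000000000 : ℝ) ≤ b ∧ b ≤ 183928675522/100000000000 := by
  have hcont : ContinuousOn (fun x : ℝ => x^3 - x^2 - x - 1)
      (Set.Icc (183928675521/100000000000 : ℝ) (183928675522/100000000000)) := by fun_prop
  have h := intermediate_value_Icc (by norm_num) hcont
  have h0 : (0:ℝ) ∈ Set.Icc ((183928675521/100000000000:ℝ)^3 - (183928675521/100000000000:ℝ)^2
      - 183928675521/100000000000 - 1)
      ((183928675522/100000000000:ℝ)^3 - (183928675522/100000000000:ℝ)^2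
      - 183928675522/100000000000 - 1) := by
    constructor <;> norm_num
  obtain ⟨b, hb, hfb⟩ := h h0
  have hfb' : b^3 - b^2 - b - 1 = 0 := hfb
  exact ⟨b, by linarith, hb.1, hb.2⟩

def vv (b : ℝ) (k : ℕ) : ℝ := b * Tn k - Tn (k+1)

variable {b : ℝ}

lemma vv_rec (hb3 : b^3 = b^2 + b + 1) (k : ℕ) :
    b * vv b (k+2) = (b - b^2) * vv b (k+1) - vv b k := by
  have hc : (Tn (k+3) : ℝ) = Tn (k+2) + Tn (k+1) + Tn k := by
    rw [show Tn (k+3) = Tn (k+2) + Tn (k+1) + Tn k from rfl]; push_cast; ring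
  unfold vv
  linear_combination (Tn (k+1) : ℝ) * hb3 - b * hc

def Qq (b : ℝ) (k : ℕ) : ℝ :=
  b * (vv b (k+1))^2 + b*(b-1) * vv b k * vv b (k+1) + (vv b k)^2

lemma Qq_step (hb3 : b^3 = b^2 + b + 1) (k : ℕ) : b * Qq b (k+1) = Qq b k := by
  have h := vv_rec hb3 k
  unfold Qq
  linear_combination (b * vv b (k+2) + ((b - b^2) * vv b (k+1) - vv b k)
    + b*(b-1) * vv b (k+1)) * h

lemma Qq_val (hb3 : b^3 = b^2 + b + 1) : ∀ k, Qq b k * b^k = b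
  | 0 => by
    have h0 : vv b 0 = 0 := by simp [vv, show Tn 0 = 0 from rfl, show Tn 1 = 0 from rfl]
    have h1 : vv b 1 = -1 := by
      simp [vv, show Tn 1 = 0 from rfl, show Tn 2 = 1 from rfl]
    simp [Qq, h0, h1]
  | (k+1) => by
    have ih := Qq_val hb3 k
    calc Qq b (k+1) * b^(k+1) = (b * Qq b (k+1)) * b^k := by ring
    _ = Qq b k * b^k := by rw [Qq_step hb3 k]
    _ = b := ih

lemma vv_abs (hb3 : b^3 = b^2 + b + 1) (hb1 : (183928675521/100000000000 : ℝ) ≤ b)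
    (hb2 : b ≤ 183928675522/100000000000) (k : ℕ) :
    |vv b k| ≤ (166/100) * (59/80:ℝ)^k := by
  have hb0 : (0:ℝ) < b := by linarith [hb1]
  have hq := Qq_val hb3 k
  have h1 : (vv b k)^2 * (1 - b*(b-1)^2/4) ≤ Qq b k := by
    unfold Qq
    nlinarith [mul_nonneg hb0.le (sq_nonneg (vv b (k+1) + (b-1) * vv b k / 2))]
  have h2 : (vv b k)^2 * (1 - b*(b-1)^2/4) * b^k ≤ b := by
    calc (vv b k)^2 * (1 - b*(b-1)^2/4) * b^k ≤ Qq b k * b^k :=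
      mul_le_mul_of_nonneg_right h1 (pow_nonneg hb0.le k)
    _ = b := hq
  have hr : (1:ℝ) ≤ (59/80:ℝ)^2 * b := by nlinarith [hb1]
  have hrk : (1:ℝ) ≤ ((59/80:ℝ)^2 * b)^k := one_le_pow₀ hr
  have hD : (0:ℝ) < 1 - b*(b-1)^2/4 := by nlinarith [hb1, hb2]
  have h3 : b ≤ (166/100:ℝ)^2 * ((59/80:ℝ)^k)^2 * ((1 - b*(b-1)^2/4) * b^k) := by
    have hADb : b ≤ (166/100:ℝ)^2 * (1 - b*(b-1)^2/4) := by nlinarith [hb1, hb2]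
    have epow : ((59/80:ℝ)^k)^2 = ((59/80:ℝ)^2)^k := by
      rw [← pow_mul, ← pow_mul, Nat.mul_comm]
    have e : (166/100:ℝ)^2 * ((59/80:ℝ)^k)^2 * ((1 - b*(b-1)^2/4) * b^k)
        = ((166/100:ℝ)^2 * (1 - b*(b-1)^2/4)) * ((59/80:ℝ)^2 * b)^k := by
      rw [epow, mul_pow]; ring
    rw [e]
    calc b = b * 1 := by ring
    _ ≤ ((166/100:ℝ)^2 * (1 - b*(b-1)^2/4)) * ((59/80:ℝ)^2 * b)^k := by
      apply mul_le_mul hADb hrk (by norm_num) (by nlinarith [hb1, hb2])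
  have h4 : (vv b k)^2 ≤ ((166/100:ℝ) * (59/80:ℝ)^k)^2 := by
    have hpos : (0:ℝ) < (1 - b*(b-1)^2/4) * b^k := by positivity
    have := le_trans h2 h3
    have h5 : (vv b k)^2 * ((1 - b*(b-1)^2/4) * b^k)
        ≤ ((166/100:ℝ) * (59/80:ℝ)^k)^2 * ((1 - b*(b-1)^2/4) * b^k) := by
      rw [mul_pow]; nlinarith [this, h2]
    exact le_of_mul_le_mul_right h5 hpos
  have hc : (0:ℝ) ≤ (166/100:ℝ) * (59/80:ℝ)^k := by positivity
  nlinarith [sq_abs (vv b k), abs_nonneg (vv b k), h4, hc]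


lemma TnV0 : Tn 0 = 0 := by decide
lemma TnV1 : Tn 1 = 0 := by decide
lemma TnV2 : Tn 2 = 1 := by decide
lemma TnV3 : Tn 3 = 1 := by decide
lemma TnV4 : Tn 4 = 2 := by decide
lemma TnV5 : Tn 5 = 4 := by decide
lemma TnV6 : Tn 6 = 7 := by decide
lemma TnV7 : Tn 7 = 13 := by decide
lemma TnV8 : Tn 8 = 24 := by decide
lemma TnV9 : Tn 9 = 44 := by decide
lemma TnV10 : Tn 10 = 81 := by decide
lemma TnV11 : Tn 11 = 149 := by decide
lemma TnV12 : Tn 12 = 274 := by decide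
lemma TnV13 : Tn 13 = 504 := by decide
lemma TnV14 : Tn 14 = 927 := by decide
lemma TnV15 : Tn 15 = 1705 := by decide
lemma TnV16 : Tn 16 = 3136 := by decide
lemma TnV17 : Tn 17 = 5768 := by decide
lemma TnV18 : Tn 18 = 10609 := by decide

lemma geom_tail (N : ℕ) : ∑ i ∈ Finset.range N, (59/80:ℝ)^i ≤ 80/21 := by
  rw [geom_sum_eq (by norm_num) N]
  have h1 : (0:ℝ) ≤ (59/80:ℝ)^N := by positivity
  rw [div_le_iff_of_neg (by norm_num : (59/80:ℝ) - 1 < 0)]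
  linarith

lemma sum_abs_bound (g : ℕ → ℝ) (C H S : ℝ) (hC : 0 ≤ C)
    (hptb : ∀ j, |g j| ≤ C * (59/80:ℝ)^j)
    (hhead : ∑ j ∈ Finset.range 16, |g j| ≤ H)
    (hS : H + C * ((59/80:ℝ)^16 * (80/21)) ≤ S) :
    ∀ k, ∑ j ∈ Finset.range k, |g j| ≤ S := by
  intro k
  have htail0 : (0:ℝ) ≤ C * ((59/80:ℝ)^16 * (80/21)) := by positivity
  rcases le_or_gt k 16 with h | h
  · have hsub : ∑ j ∈ Finset.range k, |g j| ≤ ∑ j ∈ Finset.range 16, |g j| := by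
      apply Finset.sum_le_sum_of_subset_of_nonneg (Finset.range_subset_range.mpr h)
      intro i _ _
      exact abs_nonneg _
    linarith [hhead]
  · rw [← Finset.sum_range_add_sum_Ico _ (le_of_lt h)]
    have h1 : ∑ j ∈ Finset.Ico 16 k, |g j| ≤ ∑ j ∈ Finset.Ico 16 k, C * (59/80:ℝ)^j :=
      Finset.sum_le_sum (fun j _ => hptb j)
    have h2 : ∑ j ∈ Finset.Ico 16 k, C * (59/80:ℝ)^j
        = C * ((59/80:ℝ)^16 * ∑ i ∈ Finset.range (k-16), (59/80:ℝ)^i) := by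
      rw [Finset.sum_Ico_eq_sum_range, Finset.mul_sum, Finset.mul_sum]
      apply Finset.sum_congr rfl
      intro i _
      rw [pow_add]; try ring
    have h3 : (0:ℝ) ≤ (59/80:ℝ)^16 := by positivity
    have h4 : (59/80:ℝ)^16 * ∑ i ∈ Finset.range (k-16), (59/80:ℝ)^i
        ≤ (59/80:ℝ)^16 * (80/21) := mul_le_mul_of_nonneg_left (geom_tail (k-16)) h3
    have h5 : C * ((59/80:ℝ)^16 * ∑ i ∈ Finset.range (k-16), (59/80:ℝ)^i)
        ≤ C * ((59/80:ℝ)^16 * (80/21)) := mul_le_mul_of_nonneg_left h4 hC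
    linarith [hhead]

set_option maxHeartbeats 1000000 in
lemma sum_letter0 {b : ℝ} (hb3 : b^3 = b^2 + b + 1) (hb1 : (183928675521/100000000000 : ℝ) ≤ b)
    (hb2 : b ≤ (183928675522/100000000000 : ℝ)) (w : ℝ) (hw : w * b = 1) :
    ∀ k, ∑ j ∈ Finset.range k, |(Tn (j+2) : ℝ) - w * (Tn (j+3) : ℝ)| ≤ (1242371/1000000 : ℝ) := by
  have hb0 : (0:ℝ) < b := by linarith
  have hbp : (0:ℝ) < b := by positivity
  have hweq : w = 1 / b := eq_one_div_of_mul_eq_one_left hw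
  have hw0 : (0:ℝ) < w := by rw [hweq]; positivity
  have hwlo : (54368901269/100000000000 : ℝ) ≤ w := by
    have h1 : (54368901269/100000000000 : ℝ) * b ≤ 1 := by nlinarith [pow_le_pow_left₀ hb0.le hb2 1]
    exact le_of_mul_le_mul_right (by linarith [hw]) hbp
  have hwhi : w ≤ (54368901271/100000000000 : ℝ) := by
    have h1 : (1:ℝ) ≤ (54368901271/100000000000 : ℝ) * b := by
      nlinarith [pow_le_pow_left₀ (by norm_num : (0:ℝ) ≤ (183928675521/100000000000 : ℝ)) hb1 1]
    exact le_of_mul_le_mul_right (by linarith [hw]) hbp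
  have hvv0 : ∀ j:ℕ, vv b j = b * Tn j - Tn (j+1) := fun j => by simp [vv]
  have hvv1 : ∀ j:ℕ, vv b (j+1) = b * Tn (j+1) - Tn (j+2) := fun j => by simp [vv]
  have hvv2 : ∀ j:ℕ, vv b (j+2) = b * Tn (j+2) - Tn (j+3) := fun j => by simp [vv]
  have hid : ∀ j:ℕ, (Tn (j+2) : ℝ) - w * (Tn (j+3) : ℝ) = w * vv b (j+2) := fun j => by
    rw [hvv2 j]
    linear_combination (-(Tn (j+2) : ℝ)) * hw
  have hpt : ∀ j:ℕ, |(Tn (j+2) : ℝ) - w * (Tn (j+3) : ℝ)| ≤ (49089/100000 : ℝ) * (59/80:ℝ)^j := fun j => by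
    rw [hid j, abs_mul, abs_of_pos hw0]
    have hv2 := vv_abs hb3 hb1 hb2 (j+2)
    have hs1 : w * |vv b (j+2)| ≤ (54368901271/100000000000 : ℝ) * ((166/100:ℝ) * (59/80:ℝ)^(j+2)) :=
      mul_le_mul hwhi hv2 (abs_nonneg _) (by norm_num)
    have he : (54368901271/100000000000 : ℝ) * ((166/100:ℝ) * (59/80:ℝ)^(j+2)) = ((54368901271/100000000000 : ℝ) * (166/100:ℝ) * (59/80:ℝ)^2) * (59/80:ℝ)^j := by
      ring
    have h3 : (0:ℝ) ≤ (59/80:ℝ)^j := by positivity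
    have hs2 : ((54368901271/100000000000 : ℝ) * (166/100:ℝ) * (59/80:ℝ)^2) * (59/80:ℝ)^j ≤ (49089/100000 : ℝ) * (59/80:ℝ)^j :=
      mul_le_mul_of_nonneg_right (by norm_num) h3
    linarith [hs1, he ▸ hs1, hs2]
  have hh0 : |(Tn 2 : ℝ) - w * (Tn 3 : ℝ)| ≤ (456311/1000000 : ℝ) := by
    rw [TnV2, TnV3]
    rw [abs_le]; push_cast
    constructor <;> linarith [hwlo, hwhi]
  have hh1 : |(Tn 3 : ℝ) - w * (Tn 4 : ℝ)| ≤ (873781/10000000 : ℝ) := by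
    rw [TnV3, TnV4]
    rw [abs_le]; push_cast
    constructor <;> linarith [hwlo, hwhi]
  have hh2 : |(Tn 4 : ℝ) - w * (Tn 5 : ℝ)| ≤ (1747561/10000000 : ℝ) := by
    rw [TnV4, TnV5]
    rw [abs_le]; push_cast
    constructor <;> linarith [hwlo, hwhi]
  have hh3 : |(Tn 5 : ℝ) - w * (Tn 6 : ℝ)| ≤ (194177/1000000 : ℝ) := by
    rw [TnV5, TnV6]
    rw [abs_le]; push_cast
    constructor <;> linarith [hwlo, hwhi]
  have hh4 : |(Tn 6 : ℝ) - w * (Tn 7 : ℝ)| ≤ (169893/2500000 : ℝ) := by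
    rw [TnV6, TnV7]
    rw [abs_le]; push_cast
    constructor <;> linarith [hwlo, hwhi]
  have hh5 : |(Tn 7 : ℝ) - w * (Tn 8 : ℝ)| ≤ (121341/2500000 : ℝ) := by
    rw [TnV7, TnV8]
    rw [abs_le]; push_cast
    constructor <;> linarith [hwlo, hwhi]
  have hh6 : |(Tn 8 : ℝ) - w * (Tn 9 : ℝ)| ≤ (155367/2000000 : ℝ) := by
    rw [TnV8, TnV9]
    rw [abs_le]; push_cast
    constructor <;> linarith [hwlo, hwhi]
  have hh7 : |(Tn 9 : ℝ) - w * (Tn 10 : ℝ)| ≤ (388101/10000000 : ℝ) := by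
    rw [TnV9, TnV10]
    rw [abs_le]; push_cast
    constructor <;> linarith [hwlo, hwhi]
  have hh8 : |(Tn 10 : ℝ) - w * (Tn 11 : ℝ)| ≤ (96629/10000000 : ℝ) := by
    rw [TnV10, TnV11]
    rw [abs_le]; push_cast
    constructor <;> linarith [hwlo, hwhi]
  have hh9 : |(Tn 11 : ℝ) - w * (Tn 12 : ℝ)| ≤ (146053/5000000 : ℝ) := by
    rw [TnV11, TnV12]
    rw [abs_le]; push_cast
    constructor <;> linarith [hwlo, hwhi]
  have hh10 : |(Tn 12 : ℝ) - w * (Tn 13 : ℝ)| ≤ (1541/80000 : ℝ) := by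
    rw [TnV12, TnV13]
    rw [abs_le]; push_cast
    constructor <;> linarith [hwlo, hwhi]
  have hh11 : |(Tn 13 : ℝ) - w * (Tn 14 : ℝ)| ≤ (2853/10000000 : ℝ) := by
    rw [TnV13, TnV14]
    rw [abs_le]; push_cast
    constructor <;> linarith [hwlo, hwhi]
  have hh12 : |(Tn 14 : ℝ) - w * (Tn 15 : ℝ)| ≤ (51167/5000000 : ℝ) := by
    rw [TnV14, TnV15]
    rw [abs_le]; push_cast
    constructor <;> linarith [hwlo, hwhi]
  have hh13 : |(Tn 15 : ℝ) - w * (Tn 16 : ℝ)| ≤ (87439/10000000 : ℝ) := by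
    rw [TnV15, TnV16]
    rw [abs_le]; push_cast
    constructor <;> linarith [hwlo, hwhi]
  have hh14 : |(Tn 16 : ℝ) - w * (Tn 17 : ℝ)| ≤ (17749/10000000 : ℝ) := by
    rw [TnV16, TnV17]
    rw [abs_le]; push_cast
    constructor <;> linarith [hwlo, hwhi]
  have hh15 : |(Tn 17 : ℝ) - w * (Tn 18 : ℝ)| ≤ (8161/2500000 : ℝ) := by
    rw [TnV17, TnV18]
    rw [abs_le]; push_cast
    constructor <;> linarith [hwlo, hwhi]
  have hhead : ∑ j ∈ Finset.range 16, |(Tn (j+2) : ℝ) - w * (Tn (j+3) : ℝ)| ≤ (12280473/10000000 : ℝ) := by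
    simp only [Finset.sum_range_succ, Finset.sum_range_zero, Nat.reduceAdd]
    linarith [hh0, hh1, hh2, hh3, hh4, hh5, hh6, hh7, hh8, hh9, hh10, hh11, hh12, hh13, hh14, hh15]
  exact sum_abs_bound _ (49089/100000 : ℝ) (12280473/10000000 : ℝ) (1242371/1000000 : ℝ) (by norm_num) hpt hhead (by norm_num)

set_option maxHeartbeats 1000000 in
lemma sum_letter1 {b : ℝ} (hb3 : b^3 = b^2 + b + 1) (hb1 : (183928675521/100000000000 : ℝ) ≤ b)
    (hb2 : b ≤ (183928675522/100000000000 : ℝ)) (w : ℝ) (hw : w * b^2 = 1) :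
    ∀ k, ∑ j ∈ Finset.range k, |(Tn (j+1) : ℝ) - w * (Tn (j+3) : ℝ)| ≤ (1408431/1000000 : ℝ) := by
  have hb0 : (0:ℝ) < b := by linarith
  have hbp : (0:ℝ) < b^2 := by positivity
  have hweq : w = 1 / b^2 := eq_one_div_of_mul_eq_one_left hw
  have hw0 : (0:ℝ) < w := by rw [hweq]; positivity
  have hwlo : (7389943563/25000000000 : ℝ) ≤ w := by
    have h1 : (7389943563/25000000000 : ℝ) * b^2 ≤ 1 := by nlinarith [pow_le_pow_left₀ hb0.le hb2 2]
    exact le_of_mul_le_mul_right (by linarith [hw]) hbp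
  have hwhi : w ≤ (14779887127/50000000000 : ℝ) := by
    have h1 : (1:ℝ) ≤ (14779887127/50000000000 : ℝ) * b^2 := by
      nlinarith [pow_le_pow_left₀ (by norm_num : (0:ℝ) ≤ (183928675521/100000000000 : ℝ)) hb1 2]
    exact le_of_mul_le_mul_right (by linarith [hw]) hbp
  have hvv0 : ∀ j:ℕ, vv b j = b * Tn j - Tn (j+1) := fun j => by simp [vv]
  have hvv1 : ∀ j:ℕ, vv b (j+1) = b * Tn (j+1) - Tn (j+2) := fun j => by simp [vv]
  have hvv2 : ∀ j:ℕ, vv b (j+2) = b * Tn (j+2) - Tn (j+3) := fun j => by simp [vv]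
  have hid : ∀ j:ℕ, (Tn (j+1) : ℝ) - w * (Tn (j+3) : ℝ) = w * (b * vv b (j+1) + vv b (j+2)) := fun j => by
    rw [hvv2 j, hvv1 j]
    linear_combination (-(Tn (j+1) : ℝ)) * hw
  have hpt : ∀ j:ℕ, |(Tn (j+1) : ℝ) - w * (Tn (j+3) : ℝ)| ≤ (93251/100000 : ℝ) * (59/80:ℝ)^j := fun j => by
    rw [hid j, abs_mul, abs_of_pos hw0]
    have hv1 := vv_abs hb3 hb1 hb2 (j+1)
    have hv2 := vv_abs hb3 hb1 hb2 (j+2)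
    have htri : |b * vv b (j+1) + vv b (j+2)| ≤ b * |vv b (j+1)| + |vv b (j+2)| := by
      have := abs_add_le (b * vv b (j+1)) (vv b (j+2))
      rw [abs_mul, abs_of_pos hb0] at this
      linarith
    have hb'1 : b * |vv b (j+1)| ≤ (183928675522/100000000000 : ℝ) * ((166/100:ℝ) * (59/80:ℝ)^(j+1)) :=
      mul_le_mul hb2 hv1 (abs_nonneg _) (by norm_num)
    have hnum : |b * vv b (j+1) + vv b (j+2)| ≤ (183928675522/100000000000 : ℝ) * ((166/100:ℝ) * (59/80:ℝ)^(j+1)) + (166/100:ℝ) * (59/80:ℝ)^(j+2) := by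
      linarith
    have hs1 : w * |b * vv b (j+1) + vv b (j+2)|
        ≤ (14779887127/50000000000 : ℝ) * ((183928675522/100000000000 : ℝ) * ((166/100:ℝ) * (59/80:ℝ)^(j+1)) + (166/100:ℝ) * (59/80:ℝ)^(j+2)) := by
      apply mul_le_mul hwhi hnum (abs_nonneg _) (by norm_num)
    have he : (14779887127/50000000000 : ℝ) * ((183928675522/100000000000 : ℝ) * ((166/100:ℝ) * (59/80:ℝ)^(j+1)) + (166/100:ℝ) * (59/80:ℝ)^(j+2))
        = ((14779887127/50000000000 : ℝ) * ((183928675522/100000000000 : ℝ) * (166/100:ℝ) * (59/80:ℝ) + (166/100:ℝ) * (59/80:ℝ)^2)) * (59/80:ℝ)^j := by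
      ring
    have h3 : (0:ℝ) ≤ (59/80:ℝ)^j := by positivity
    have hs2 : ((14779887127/50000000000 : ℝ) * ((183928675522/100000000000 : ℝ) * (166/100:ℝ) * (59/80:ℝ) + (166/100:ℝ) * (59/80:ℝ)^2)) * (59/80:ℝ)^j
        ≤ (93251/100000 : ℝ) * (59/80:ℝ)^j := mul_le_mul_of_nonneg_right (by norm_num) h3
    linarith [he ▸ hs1]
  have hh0 : |(Tn 1 : ℝ) - w * (Tn 3 : ℝ)| ≤ (1477989/5000000 : ℝ) := by
    rw [TnV1, TnV3]
    rw [abs_le]; push_cast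
    constructor <;> linarith [hwlo, hwhi]
  have hh1 : |(Tn 2 : ℝ) - w * (Tn 4 : ℝ)| ≤ (2044023/5000000 : ℝ) := by
    rw [TnV2, TnV4]
    rw [abs_le]; push_cast
    constructor <;> linarith [hwlo, hwhi]
  have hh2 : |(Tn 3 : ℝ) - w * (Tn 5 : ℝ)| ≤ (182391/1000000 : ℝ) := by
    rw [TnV3, TnV5]
    rw [abs_le]; push_cast
    constructor <;> linarith [hwlo, hwhi]
  have hh3 : |(Tn 4 : ℝ) - w * (Tn 6 : ℝ)| ≤ (345921/5000000 : ℝ) := by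
    rw [TnV4, TnV6]
    rw [abs_le]; push_cast
    constructor <;> linarith [hwlo, hwhi]
  have hh4 : |(Tn 5 : ℝ) - w * (Tn 7 : ℝ)| ≤ (786147/5000000 : ℝ) := by
    rw [TnV5, TnV7]
    rw [abs_le]; push_cast
    constructor <;> linarith [hwlo, hwhi]
  have hh5 : |(Tn 6 : ℝ) - w * (Tn 8 : ℝ)| ≤ (943459/10000000 : ℝ) := by
    rw [TnV6, TnV8]
    rw [abs_le]; push_cast
    constructor <;> linarith [hwlo, hwhi]
  have hh6 : |(Tn 7 : ℝ) - w * (Tn 9 : ℝ)| ≤ (63007/10000000 : ℝ) := by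
    rw [TnV7, TnV9]
    rw [abs_le]; push_cast
    constructor <;> linarith [hwlo, hwhi]
  have hh7 : |(Tn 8 : ℝ) - w * (Tn 10 : ℝ)| ≤ (565829/10000000 : ℝ) := by
    rw [TnV8, TnV10]
    rw [abs_le]; push_cast
    constructor <;> linarith [hwlo, hwhi]
  have hh8 : |(Tn 9 : ℝ) - w * (Tn 11 : ℝ)| ≤ (440637/10000000 : ℝ) := by
    rw [TnV9, TnV11]
    rw [abs_le]; push_cast
    constructor <;> linarith [hwlo, hwhi]
  have hh9 : |(Tn 10 : ℝ) - w * (Tn 12 : ℝ)| ≤ (31093/5000000 : ℝ) := by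
    rw [TnV10, TnV12]
    rw [abs_le]; push_cast
    constructor <;> linarith [hwlo, hwhi]
  have hh10 : |(Tn 11 : ℝ) - w * (Tn 13 : ℝ)| ≤ (93689/5000000 : ℝ) := by
    rw [TnV11, TnV13]
    rw [abs_le]; push_cast
    constructor <;> linarith [hwlo, hwhi]
  have hh11 : |(Tn 12 : ℝ) - w * (Tn 14 : ℝ)| ≤ (95537/5000000 : ℝ) := by
    rw [TnV12, TnV14]
    rw [abs_le]; push_cast
    constructor <;> linarith [hwlo, hwhi]
  have hh12 : |(Tn 13 : ℝ) - w * (Tn 15 : ℝ)| ≤ (58491/10000000 : ℝ) := by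
    rw [TnV13, TnV15]
    rw [abs_le]; push_cast
    constructor <;> linarith [hwlo, hwhi]
  have hh13 : |(Tn 14 : ℝ) - w * (Tn 16 : ℝ)| ≤ (10959/2000000 : ℝ) := by
    rw [TnV14, TnV16]
    rw [abs_le]; push_cast
    constructor <;> linarith [hwlo, hwhi]
  have hh14 : |(Tn 15 : ℝ) - w * (Tn 17 : ℝ)| ≤ (7779/1000000 : ℝ) := by
    rw [TnV15, TnV17]
    rw [abs_le]; push_cast
    constructor <;> linarith [hwlo, hwhi]
  have hh15 : |(Tn 16 : ℝ) - w * (Tn 18 : ℝ)| ≤ (35497/10000000 : ℝ) := by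
    rw [TnV16, TnV18]
    rw [abs_le]; push_cast
    constructor <;> linarith [hwlo, hwhi]
  have hhead : ∑ j ∈ Finset.range 16, |(Tn (j+1) : ℝ) - w * (Tn (j+3) : ℝ)| ≤ (13812213/10000000 : ℝ) := by
    simp only [Finset.sum_range_succ, Finset.sum_range_zero, Nat.reduceAdd]
    linarith [hh0, hh1, hh2, hh3, hh4, hh5, hh6, hh7, hh8, hh9, hh10, hh11, hh12, hh13, hh14, hh15]
  exact sum_abs_bound _ (93251/100000 : ℝ) (13812213/10000000 : ℝ) (1408431/1000000 : ℝ) (by norm_num) hpt hhead (by norm_num)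

set_option maxHeartbeats 1000000 in
lemma sum_letter2 {b : ℝ} (hb3 : b^3 = b^2 + b + 1) (hb1 : (183928675521/100000000000 : ℝ) ≤ b)
    (hb2 : b ≤ (183928675522/100000000000 : ℝ)) (w : ℝ) (hw : w * b^3 = 1) :
    ∀ k, ∑ j ∈ Finset.range k, |(Tn j : ℝ) - w * (Tn (j+3) : ℝ)| ≤ (733693/500000 : ℝ) := by
  have hb0 : (0:ℝ) < b := by linarith
  have hbp : (0:ℝ) < b^3 := by positivity
  have hweq : w = 1 / b^3 := eq_one_div_of_mul_eq_one_left hw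
  have hw0 : (0:ℝ) < w := by rw [hweq]; positivity
  have hwlo : (8035662239/50000000000 : ℝ) ≤ w := by
    have h1 : (8035662239/50000000000 : ℝ) * b^3 ≤ 1 := by nlinarith [pow_le_pow_left₀ hb0.le hb2 3]
    exact le_of_mul_le_mul_right (by linarith [hw]) hbp
  have hwhi : w ≤ (50222889/312500000 : ℝ) := by
    have h1 : (1:ℝ) ≤ (50222889/312500000 : ℝ) * b^3 := by
      nlinarith [pow_le_pow_left₀ (by norm_num : (0:ℝ) ≤ (183928675521/100000000000 : ℝ)) hb1 3]
    exact le_of_mul_le_mul_right (by linarith [hw]) hbp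
  have hvv0 : ∀ j:ℕ, vv b j = b * Tn j - Tn (j+1) := fun j => by simp [vv]
  have hvv1 : ∀ j:ℕ, vv b (j+1) = b * Tn (j+1) - Tn (j+2) := fun j => by simp [vv]
  have hvv2 : ∀ j:ℕ, vv b (j+2) = b * Tn (j+2) - Tn (j+3) := fun j => by simp [vv]
  have hid : ∀ j:ℕ, (Tn j : ℝ) - w * (Tn (j+3) : ℝ) = w * (b^2 * vv b j + b * vv b (j+1) + vv b (j+2)) := fun j => by
    rw [hvv2 j, hvv1 j, hvv0 j]
    linear_combination (-(Tn j : ℝ)) * hw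
  have hpt : ∀ j:ℕ, |(Tn j : ℝ) - w * (Tn (j+3) : ℝ)| ≤ (17619/12500 : ℝ) * (59/80:ℝ)^j := fun j => by
    rw [hid j, abs_mul, abs_of_pos hw0]
    have hv0 := vv_abs hb3 hb1 hb2 j
    have hv1 := vv_abs hb3 hb1 hb2 (j+1)
    have hv2 := vv_abs hb3 hb1 hb2 (j+2)
    have hbsq : (0:ℝ) < b^2 := by positivity
    have htri : |b^2 * vv b j + b * vv b (j+1) + vv b (j+2)|
        ≤ b^2 * |vv b j| + b * |vv b (j+1)| + |vv b (j+2)| := by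
      have t1 := abs_add_le (b^2 * vv b j + b * vv b (j+1)) (vv b (j+2))
      have t2 := abs_add_le (b^2 * vv b j) (b * vv b (j+1))
      rw [abs_mul, abs_mul, abs_of_pos hbsq, abs_of_pos hb0] at t2
      linarith
    have hbsq2 : b^2 ≤ (183928675522/100000000000 : ℝ)^2 := by nlinarith [hb1, hb2]
    have hb'0 : b^2 * |vv b j| ≤ (183928675522/100000000000 : ℝ)^2 * ((166/100:ℝ) * (59/80:ℝ)^j) :=
      mul_le_mul hbsq2 hv0 (abs_nonneg _) (by positivity)
    have hb'1 : b * |vv b (j+1)| ≤ (183928675522/100000000000 : ℝ) * ((166/100:ℝ) * (59/80:ℝ)^(j+1)) :=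
      mul_le_mul hb2 hv1 (abs_nonneg _) (by norm_num)
    have hnum : |b^2 * vv b j + b * vv b (j+1) + vv b (j+2)|
        ≤ (183928675522/100000000000 : ℝ)^2 * ((166/100:ℝ) * (59/80:ℝ)^j) + (183928675522/100000000000 : ℝ) * ((166/100:ℝ) * (59/80:ℝ)^(j+1)) + (166/100:ℝ) * (59/80:ℝ)^(j+2) := by
      linarith
    have hs1 : w * |b^2 * vv b j + b * vv b (j+1) + vv b (j+2)|
        ≤ (50222889/312500000 : ℝ) * ((183928675522/100000000000 : ℝ)^2 * ((166/100:ℝ) * (59/80:ℝ)^j) + (183928675522/100000000000 : ℝ) * ((166/100:ℝ) * (59/80:ℝ)^(j+1)) + (166/100:ℝ) * (59/80:ℝ)^(j+2)) := by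
      apply mul_le_mul hwhi hnum (abs_nonneg _) (by norm_num)
    have he : (50222889/312500000 : ℝ) * ((183928675522/100000000000 : ℝ)^2 * ((166/100:ℝ) * (59/80:ℝ)^j) + (183928675522/100000000000 : ℝ) * ((166/100:ℝ) * (59/80:ℝ)^(j+1)) + (166/100:ℝ) * (59/80:ℝ)^(j+2))
        = ((50222889/312500000 : ℝ) * ((183928675522/100000000000 : ℝ)^2 * (166/100:ℝ) + (183928675522/100000000000 : ℝ) * (166/100:ℝ) * (59/80:ℝ) + (166/100:ℝ) * (59/80:ℝ)^2)) * (59/80:ℝ)^j := by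
      ring
    have h3 : (0:ℝ) ≤ (59/80:ℝ)^j := by positivity
    have hs2 : ((50222889/312500000 : ℝ) * ((183928675522/100000000000 : ℝ)^2 * (166/100:ℝ) + (183928675522/100000000000 : ℝ) * (166/100:ℝ) * (59/80:ℝ) + (166/100:ℝ) * (59/80:ℝ)^2)) * (59/80:ℝ)^j
        ≤ (17619/12500 : ℝ) * (59/80:ℝ)^j := mul_le_mul_of_nonneg_right (by norm_num) h3
    linarith [he ▸ hs1]
  have hh0 : |(Tn 0 : ℝ) - w * (Tn 3 : ℝ)| ≤ (1607133/10000000 : ℝ) := by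
    rw [TnV0, TnV3]
    rw [abs_le]; push_cast
    constructor <;> linarith [hwlo, hwhi]
  have hh1 : |(Tn 1 : ℝ) - w * (Tn 4 : ℝ)| ≤ (642853/2000000 : ℝ) := by
    rw [TnV1, TnV4]
    rw [abs_le]; push_cast
    constructor <;> linarith [hwlo, hwhi]
  have hh2 : |(Tn 2 : ℝ) - w * (Tn 5 : ℝ)| ≤ (3571471/10000000 : ℝ) := by
    rw [TnV2, TnV5]
    rw [abs_le]; push_cast
    constructor <;> linarith [hwlo, hwhi]
  have hh3 : |(Tn 3 : ℝ) - w * (Tn 6 : ℝ)| ≤ (156241/1250000 : ℝ) := by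
    rw [TnV3, TnV6]
    rw [abs_le]; push_cast
    constructor <;> linarith [hwlo, hwhi]
  have hh4 : |(Tn 4 : ℝ) - w * (Tn 7 : ℝ)| ≤ (446361/5000000 : ℝ) := by
    rw [TnV4, TnV7]
    rw [abs_le]; push_cast
    constructor <;> linarith [hwlo, hwhi]
  have hh5 : |(Tn 5 : ℝ) - w * (Tn 8 : ℝ)| ≤ (714411/5000000 : ℝ) := by
    rw [TnV5, TnV8]
    rw [abs_le]; push_cast
    constructor <;> linarith [hwlo, hwhi]
  have hh6 : |(Tn 6 : ℝ) - w * (Tn 9 : ℝ)| ≤ (178457/2500000 : ℝ) := by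
    rw [TnV6, TnV9]
    rw [abs_le]; push_cast
    constructor <;> linarith [hwlo, hwhi]
  have hh7 : |(Tn 7 : ℝ) - w * (Tn 10 : ℝ)| ≤ (177729/10000000 : ℝ) := by
    rw [TnV7, TnV10]
    rw [abs_le]; push_cast
    constructor <;> linarith [hwlo, hwhi]
  have hh8 : |(Tn 8 : ℝ) - w * (Tn 11 : ℝ)| ≤ (268633/5000000 : ℝ) := by
    rw [TnV8, TnV11]
    rw [abs_le]; push_cast
    constructor <;> linarith [hwlo, hwhi]
  have hh9 : |(Tn 9 : ℝ) - w * (Tn 12 : ℝ)| ≤ (354291/10000000 : ℝ) := by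
    rw [TnV9, TnV12]
    rw [abs_le]; push_cast
    constructor <;> linarith [hwlo, hwhi]
  have hh10 : |(Tn 10 : ℝ) - w * (Tn 13 : ℝ)| ≤ (5247/10000000 : ℝ) := by
    rw [TnV10, TnV13]
    rw [abs_le]; push_cast
    constructor <;> linarith [hwlo, hwhi]
  have hh11 : |(Tn 11 : ℝ) - w * (Tn 14 : ℝ)| ≤ (188221/10000000 : ℝ) := by
    rw [TnV11, TnV14]
    rw [abs_le]; push_cast
    constructor <;> linarith [hwlo, hwhi]
  have hh12 : |(Tn 12 : ℝ) - w * (Tn 15 : ℝ)| ≤ (20103/1250000 : ℝ) := by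
    rw [TnV12, TnV15]
    rw [abs_le]; push_cast
    constructor <;> linarith [hwlo, hwhi]
  have hh13 : |(Tn 13 : ℝ) - w * (Tn 16 : ℝ)| ≤ (8161/2500000 : ℝ) := by
    rw [TnV13, TnV16]
    rw [abs_le]; push_cast
    constructor <;> linarith [hwlo, hwhi]
  have hh14 : |(Tn 14 : ℝ) - w * (Tn 17 : ℝ)| ≤ (30021/5000000 : ℝ) := by
    rw [TnV14, TnV17]
    rw [abs_le]; push_cast
    constructor <;> linarith [hwlo, hwhi]
  have hh15 : |(Tn 15 : ℝ) - w * (Tn 18 : ℝ)| ≤ (68141/10000000 : ℝ) := by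
    rw [TnV15, TnV18]
    rw [abs_le]; push_cast
    constructor <;> linarith [hwlo, hwhi]
  have hhead : ∑ j ∈ Finset.range 16, |(Tn j : ℝ) - w * (Tn (j+3) : ℝ)| ≤ (7131287/5000000 : ℝ) := by
    simp only [Finset.sum_range_succ, Finset.sum_range_zero, Nat.reduceAdd]
    linarith [hh0, hh1, hh2, hh3, hh4, hh5, hh6, hh7, hh8, hh9, hh10, hh11, hh12, hh13, hh14, hh15]
  exact sum_abs_bound _ (17619/12500 : ℝ) (7131287/5000000 : ℝ) (733693/500000 : ℝ) (by norm_num) hpt hhead (by norm_num)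

set_option maxHeartbeats 1000000 in
lemma master (c : ℕ) (α S : ℝ) (hS : S < 3/2)
    (hsum : ∀ k, ∑ j ∈ Finset.range k, |((tribBlock j).count c : ℝ) - α * (Tn (j+3) : ℝ)| ≤ S)
    (n i j : ℕ) :
    |(tribN c i 1 n : ℤ) - (tribN c j 1 n : ℤ)| ≤ 2 := by
  set δ : ℕ → ℝ := fun m => ((tribBlock m).count c : ℝ) - α * (Tn (m+3) : ℝ) with hδ
  set g : ℕ → ℝ := fun x => (fc c x : ℝ) - α * x with hg
  set P : ℕ → ℝ := fun k => ∑ m ∈ Finset.range k, max (δ m) 0 with hP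
  set M : ℕ → ℝ := fun k => ∑ m ∈ Finset.range k, max (-δ m) 0 with hM
  have hPM : ∀ k, P k + M k ≤ S := by
    intro k
    have he : P k + M k = ∑ m ∈ Finset.range k, |δ m| := by
      rw [hP, hM]
      rw [← Finset.sum_add_distrib]
      apply Finset.sum_congr rfl
      intro x _
      rcases le_total (δ x) 0 with h | h
      · rw [max_eq_right h, max_eq_left (by linarith), abs_of_nonpos h]; ring
      · rw [max_eq_left h, max_eq_right (by linarith), abs_of_nonneg h]; ring
    rw [he]; exact hsum k
  have claim : ∀ k, ∀ x, x < Tn (k+3) → -(M k) ≤ g x ∧ g x ≤ P k := by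
    intro k
    induction k with
    | zero =>
      intro x hx
      have hx0 : x = 0 := by
        have e : Tn (0+3) = 1 := by decide
        omega
      subst hx0
      have hg0 : g 0 = 0 := by simp [hg, fc]
      have hP0 : P 0 = 0 := by simp [hP]
      have hM0 : M 0 = 0 := by simp [hM]
      rw [hg0, hP0, hM0]; norm_num
    | succ k ih =>
      intro x hx
      have hPs : P (k+1) = P k + max (δ k) 0 := by
        rw [hP]; simp [Finset.sum_range_succ]
      have hMs : M (k+1) = M k + max (-δ k) 0 := by
        rw [hM]; simp [Finset.sum_range_succ]
      have hmax1 : δ k ≤ max (δ k) 0 := le_max_left _ _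
      have hmax2 : -δ k ≤ max (-δ k) 0 := le_max_left _ _
      have hmax3 : (0:ℝ) ≤ max (δ k) 0 := le_max_right _ _
      have hmax4 : (0:ℝ) ≤ max (-δ k) 0 := le_max_right _ _
      rcases Nat.lt_or_ge x (Tn (k+3)) with h | h
      · obtain ⟨h1, h2⟩ := ih x h
        constructor <;> linarith
      · obtain ⟨m, rfl⟩ := Nat.exists_eq_add_of_le h
        rcases k with _ | k1
        · -- k = 0
          have e3 : Tn (0+3) = 1 := by decide
          have e4 : Tn (0+1+3) = 2 := by decide
          have hm0 : m = 0 := by omega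
          subst hm0
          have hx1 : Tn (0+3) + 0 = 1 := by decide
          have hfc : fc c 1 = (tribBlock 0).count c := by
            rw [fc_take c 0 1 (by decide)]
            try rfl
          have hgx : g 1 = δ 0 := by
            rw [hg, hδ]
            simp only []
            rw [hfc, (by decide : Tn (0+3) = 1)]
            try push_cast
            try ring
          rw [hx1, hgx]
          have hP0 : P 0 = 0 := by simp [hP]
          have hM0 : M 0 = 0 := by simp [hM]
          constructor
          · rw [hMs, hM0]; linarith
          · rw [hPs, hP0]; linarith
        · rcases k1 with _ | k'
          · -- k = 1
            have e4 : Tn (0+1+3) = 2 := by decide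
            have e5 : Tn (0+1+1+3) = 4 := by decide
            have hP1 : P (0+1) = max (δ 0) 0 := by
              rw [hP]; simp [Finset.sum_range_one]
            have hM1 : M (0+1) = max (-δ 0) 0 := by
              rw [hM]; simp [Finset.sum_range_one]
            have hmax5 : δ 0 ≤ max (δ 0) 0 := le_max_left _ _
            have hmax6 : -δ 0 ≤ max (-δ 0) 0 := le_max_left _ _
            have hmax7 : (0:ℝ) ≤ max (δ 0) 0 := le_max_right _ _
            have hmax8 : (0:ℝ) ≤ max (-δ 0) 0 := le_max_right _ _
            have hm01 : m = 0 ∨ m = 1 := by omega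
            rcases hm01 with rfl | rfl
            · have hx1 : Tn (0+1+3) + 0 = 2 := by decide
              have hfc : fc c 2 = (tribBlock 1).count c := by
                rw [fc_take c 1 2 (by decide)]
                try rfl
              have hgx : g 2 = δ (0+1) := by
                rw [hg, hδ]
                simp only []
                rw [hfc, (by decide : Tn (0+1+3) = 2)]
                try push_cast
                try ring
              rw [hx1, hgx]
              constructor
              · rw [hMs, hM1]; linarith
              · rw [hPs, hP1]; linarith
            · have hx1 : Tn (0+1+3) + 1 = 3 := by decide
              have hfc : fc c 3 = (tribBlock 1).count c + (tribBlock 0).count c := by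
                rw [fc_take c 2 3 (by decide),
                  (show (tribBlock 2).take 3 = tribBlock 1 ++ tribBlock 0 from rfl),
                  List.count_append]
              have hgx : g 3 = δ (0+1) + δ 0 := by
                rw [hg, hδ]
                simp only []
                rw [hfc, (by decide : Tn (0+1+3) = 2), (by decide : Tn (0+3) = 1)]
                try push_cast
                try ring
              rw [hx1, hgx]
              constructor
              · rw [hMs, hM1]; linarith
              · rw [hPs, hP1]; linarith
          · -- k = k'+2, descent
            have e5 : Tn (k'+1+1+3) = Tn (k'+5) := rfl
            have e4' : Tn (k'+5) = Tn (k'+4) + Tn (k'+3) + Tn (k'+2) := rfl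
            have ebig : Tn (k'+1+1+1+3) = Tn (k'+5) + Tn (k'+4) + Tn (k'+3) := rfl
            have hpos := Tn_pos k'
            have hm : m ≤ Tn (k'+4) + Tn (k'+3) := by omega
            have hlt : m < Tn (k'+1+1+3) := by omega
            obtain ⟨hl, hr⟩ := ih m hlt
            have hdes : fc c (Tn (k'+1+1+3) + m) = (tribBlock (k'+1+1)).count c + fc c m :=
              descent c k' m hm
            have hgx : g (Tn (k'+1+1+3) + m) = δ (k'+1+1) + g m := by
              rw [hg, hδ]
              simp only []
              rw [hdes]
              try push_cast
              try ring
            rw [hgx]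
            constructor
            · rw [hMs]; linarith
            · rw [hPs]; linarith
  have gdiff : ∀ x y : ℕ, g x - g y ≤ S := by
    intro x y
    have hx : x < Tn (x + y + 3) := by
      have h1 := Tn_ge (x + y); omega
    have hy : y < Tn (x + y + 3) := by
      have h1 := Tn_ge (x + y); omega
    obtain ⟨_, h2⟩ := claim (x+y) x hx
    obtain ⟨h3, _⟩ := claim (x+y) y hy
    have h4 := hPM (x+y)
    linarith
  have htri : ∀ a : ℕ, fc c (a + n) = fc c a + tribN c a 1 n := by
    intro a
    have h1 : tribN c a 1 n = ∑ l ∈ Finset.range n, if trib (a + l) = c then 1 else 0 := by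
      rw [tribN, Finset.sum_range_one]
      simp
    rw [h1, fc, ← Finset.sum_range_add_sum_Ico _ (Nat.le_add_right a n)]
    congr 1
    rw [Finset.sum_Ico_eq_sum_range]
    simp
  have e1 : (tribN c i 1 n : ℝ) = g (i+n) - g i + α * n := by
    have h1 := htri i
    have hcast : ((fc c (i+n)):ℝ) = (fc c i : ℝ) + (tribN c i 1 n : ℝ) := by
      exact_mod_cast congrArg (Nat.cast : ℕ → ℝ) h1
    rw [hg]
    simp only []
    push_cast
    linarith
  have e2 : (tribN c j 1 n : ℝ) = g (j+n) - g j + α * n := by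
    have h1 := htri j
    have hcast : ((fc c (j+n)):ℝ) = (fc c j : ℝ) + (tribN c j 1 n : ℝ) := by
      exact_mod_cast congrArg (Nat.cast : ℕ → ℝ) h1
    rw [hg]
    simp only []
    push_cast
    linarith
  have habs : |(tribN c i 1 n : ℝ) - (tribN c j 1 n : ℝ)| < 3 := by
    rw [abs_lt]
    constructor
    · have d1 := gdiff (j+n) j
      have d2 := gdiff i (i+n)
      rw [e1, e2]; linarith
    · have d1 := gdiff (i+n) i
      have d2 := gdiff j (j+n)
      rw [e1, e2]; linarith
  have hZ : |(tribN c i 1 n : ℤ) - (tribN c j 1 n : ℤ)| < 3 := by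
    have h5 : ((|(tribN c i 1 n : ℤ) - (tribN c j 1 n : ℤ)| : ℤ) : ℝ) < 3 := by
      rw [Int.cast_abs]
      push_cast
      exact habs
    exact_mod_cast h5
  omega

theorem trib_one_row_two_balanced (n i j c : ℕ) (hc : c ∈ ({0, 1, 2} : Set ℕ)) :
    |(tribN c i 1 n : ℤ) - (tribN c j 1 n : ℤ)| ≤ 2 := by
  obtain ⟨b, hb3, hb1, hb2⟩ := exists_beta
  have hb0 : (0:ℝ) < b := by linarith
  simp only [Set.mem_insert_iff, Set.mem_singleton_iff] at hc
  rcases hc with rfl | rfl | rfl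
  · have hw : (1/b) * b = 1 := by field_simp
    have hsum := sum_letter0 hb3 hb1 hb2 (1/b) hw
    refine master 0 (1/b) (1242371/1000000) (by norm_num) (fun k => ?_) n i j
    have he : ∀ m:ℕ, ((tribBlock m).count 0 : ℝ) = (Tn (m+2) : ℝ) := fun m => by
      rw [block_count m 0]; norm_num
    calc ∑ x ∈ Finset.range k, |((tribBlock x).count 0 : ℝ) - (1/b) * (Tn (x+3) : ℝ)|
        = ∑ x ∈ Finset.range k, |(Tn (x+2) : ℝ) - (1/b) * (Tn (x+3) : ℝ)| :=
          Finset.sum_congr rfl (fun m _ => by rw [he m])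
    _ ≤ _ := hsum k
  · have hw : (1/b^2) * b^2 = 1 := by field_simp
    have hsum := sum_letter1 hb3 hb1 hb2 (1/b^2) hw
    refine master 1 (1/b^2) (1408431/1000000) (by norm_num) (fun k => ?_) n i j
    have he : ∀ m:ℕ, ((tribBlock m).count 1 : ℝ) = (Tn (m+1) : ℝ) := fun m => by
      rw [block_count m 1]; norm_num
    calc ∑ x ∈ Finset.range k, |((tribBlock x).count 1 : ℝ) - (1/b^2) * (Tn (x+3) : ℝ)|
        = ∑ x ∈ Finset.range k, |(Tn (x+1) : ℝ) - (1/b^2) * (Tn (x+3) : ℝ)| :=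
          Finset.sum_congr rfl (fun m _ => by rw [he m])
    _ ≤ _ := hsum k
  · have hw : (1/b^3) * b^3 = 1 := by field_simp
    have hsum := sum_letter2 hb3 hb1 hb2 (1/b^3) hw
    refine master 2 (1/b^3) (733693/500000) (by norm_num) (fun k => ?_) n i j
    have he : ∀ m:ℕ, ((tribBlock m).count 2 : ℝ) = (Tn m : ℝ) := fun m => by
      rw [block_count m 2]; norm_num
    calc ∑ x ∈ Finset.range k, |((tribBlock x).count 2 : ℝ) - (1/b^3) * (Tn (x+3) : ℝ)|
        = ∑ x ∈ Finset.range k, |(Tn x : ℝ) - (1/b^3) * (Tn (x+3) : ℝ)| :=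
          Finset.sum_congr rfl (fun m _ => by rw [he m])
    _ ≤ _ := hsum k
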